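/- Let 0 ≤ p ≤ 1, let Z = [[1,0],[0,−1]], let E^deph(σ) = (1 − p/2)·σ + (p/2)·ZσZ be the single-qubit partially dephasing channel, and let U be a 2×2 unitary matrix. Then for every real s ≥ 1 and every pair of quantum channels W, M on 2×2 complex matrices satisfying UρU† = s·E^deph(W(ρ)) − (s−1)·M(ρ) for all ρ, one has s − 1 ≥ p/(2−p). (This is the lower-bound direction of Theorem 4; together with the matching feasible decomposition it gives R⁺_deph(U) = p/(2−p).) -/

import Mathlib

open Matrix

/-- A quantum channel (CPTP map) on `d×d` complex matrices: a map admitting a finite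
family of Kraus operators `K i` with `∑ Kᴴ K = 1`. -/
def IsQuantumChannel {d : ℕ} (F : Matrix (Fin d) (Fin d) ℂ → Matrix (Fin d) (Fin d) ℂ) : Prop :=
  ∃ (k : ℕ) (K : Fin k → Matrix (Fin d) (Fin d) ℂ),
    (∑ i, (K i)ᴴ * K i) = 1 ∧ ∀ ρ, F ρ = ∑ i, K i * ρ * (K i)ᴴ

/-- The Pauli Z matrix. -/
def PauliZ : Matrix (Fin 2) (Fin 2) ℂ := !![1, 0; 0, -1]

noncomputable def vecM (A : Matrix (Fin 2) (Fin 2) ℂ) : EuclideanSpace ℂ (Fin 2 × Fin 2) :=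
  WithLp.toLp 2 (fun q : Fin 2 × Fin 2 => A q.1 q.2)

lemma inner_vecM (A B : Matrix (Fin 2) (Fin 2) ℂ) :
    (inner ℂ (vecM A) (vecM B) : ℂ) = Matrix.trace (Aᴴ * B) := by
  simp [vecM, PiLp.inner_apply, RCLike.inner_apply, Matrix.trace, Matrix.diag,
    Matrix.mul_apply, Matrix.conjTranspose_apply, Fintype.sum_prod_type]
  ring

lemma norm_vecM_sq (A : Matrix (Fin 2) (Fin 2) ℂ) :
    ‖vecM A‖ ^ 2 = (Matrix.trace (Aᴴ * A)).re := by
  rw [← inner_self_eq_norm_sq (𝕜 := ℂ), inner_vecM]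
  simp

lemma phi_kraus (V K : Matrix (Fin 2) (Fin 2) ℂ) :
    ∑ a : Fin 2, ∑ b : Fin 2, (Vᴴ * (K * Matrix.single a b (1:ℂ) * Kᴴ) * V) a b
      = Matrix.trace (Vᴴ * K) * Matrix.trace (Kᴴ * V) := by
  simp [Matrix.mul_apply, Matrix.trace, Matrix.diag, Matrix.single,
    Matrix.conjTranspose_apply, Fin.sum_univ_two, Matrix.of_apply]
  ring

lemma pauliZ_conjTranspose : PauliZᴴ = PauliZ := by
  ext i j; fin_cases i <;> fin_cases j <;> simp [PauliZ]

lemma pauliZ_mul_self : PauliZ * PauliZ = 1 := by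
  ext i j; fin_cases i <;> fin_cases j <;>
    simp [PauliZ, Matrix.mul_apply, Fin.sum_univ_two, Matrix.one_apply]

lemma pauliZ_trace : Matrix.trace PauliZ = 0 := by
  simp [PauliZ, Matrix.trace, Fin.sum_univ_two]

lemma sum_mul_star {k : ℕ} (t : Fin k → ℂ) :
    ∑ i, t i * star (t i) = ((∑ i, ‖t i‖^2 : ℝ) : ℂ) := by
  push_cast
  refine Finset.sum_congr rfl fun i _ => ?_
  rw [Complex.star_def, Complex.mul_conj, Complex.normSq_eq_norm_sq]
  norm_cast

lemma phi_channel (V : Matrix (Fin 2) (Fin 2) ℂ) {k : ℕ} (K : Fin k → Matrix (Fin 2) (Fin 2) ℂ)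
    (N : Matrix (Fin 2) (Fin 2) ℂ → Matrix (Fin 2) (Fin 2) ℂ)
    (hN : ∀ ρ, N ρ = ∑ i, K i * ρ * (K i)ᴴ) :
    ∑ a : Fin 2, ∑ b : Fin 2, (Vᴴ * N (Matrix.single a b 1) * V) a b
      = ((∑ i, ‖Matrix.trace (Vᴴ * K i)‖^2 : ℝ) : ℂ) := by
  rw [← sum_mul_star]
  have h1 : ∀ a b : Fin 2, (Vᴴ * N (Matrix.single a b 1) * V) a b
      = ∑ i, (Vᴴ * (K i * Matrix.single a b (1:ℂ) * (K i)ᴴ) * V) a b := by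
    intro a b
    rw [hN, Matrix.mul_sum, Matrix.sum_mul, Matrix.sum_apply]
  simp_rw [h1]
  have hsw : ∀ (g : Fin 2 → Fin 2 → Fin k → ℂ),
      ∑ a, ∑ b, ∑ i, g a b i = ∑ i, ∑ a, ∑ b, g a b i := by
    intro g
    calc ∑ a, ∑ b, ∑ i, g a b i
        = ∑ a, ∑ i, ∑ b, g a b i := Finset.sum_congr rfl fun a _ => Finset.sum_comm
      _ = ∑ i, ∑ a, ∑ b, g a b i := Finset.sum_comm
  rw [hsw]
  refine Finset.sum_congr rfl fun i _ => ?_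
  rw [phi_kraus]
  congr 1
  rw [← Matrix.trace_conjTranspose, Matrix.conjTranspose_mul, Matrix.conjTranspose_conjTranspose]


/-- Theorem 4 (lower-bound direction): for the single-qubit partially dephasing channel
`E^deph(σ) = (1 − p/2)·σ + (p/2)·ZσZ` and a `2×2` unitary `U`, every decomposition
`UρU† = s·E^deph(W(ρ)) − (s−1)·M(ρ)` with `s ≥ 1` and `W, M` quantum channels satisfies
`s − 1 ≥ p/(2−p)`. -/
theorem dephasing_robustness_lower_bound
    (p : ℝ) (hp0 : 0 ≤ p) (hp1 : p ≤ 1)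
    (E : Matrix (Fin 2) (Fin 2) ℂ → Matrix (Fin 2) (Fin 2) ℂ)
    (hE : ∀ σ, E σ = ((1 - p / 2 : ℝ) : ℂ) • σ + ((p / 2 : ℝ) : ℂ) • (PauliZ * σ * PauliZ))
    (U : Matrix (Fin 2) (Fin 2) ℂ) (hU : U ∈ Matrix.unitaryGroup (Fin 2) ℂ)
    (s : ℝ) (hs : 1 ≤ s)
    (W M : Matrix (Fin 2) (Fin 2) ℂ → Matrix (Fin 2) (Fin 2) ℂ)
    (hW : IsQuantumChannel W) (hM : IsQuantumChannel M)
    (hdecomp : ∀ ρ, U * ρ * Uᴴ = (s : ℂ) • E (W ρ) - ((s : ℂ) - 1) • M ρ) :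
    s - 1 ≥ p / (2 - p) := by
  obtain ⟨m, K, hK1, hKW⟩ := hW
  obtain ⟨n, L, hL1, hLM⟩ := hM
  have hUl : Uᴴ * U = 1 := by
    have := Matrix.mem_unitaryGroup_iff'.mp hU
    rwa [Matrix.star_eq_conjTranspose] at this
  have hUr : U * Uᴴ = 1 := by
    have := Matrix.mem_unitaryGroup_iff.mp hU
    rwa [Matrix.star_eq_conjTranspose] at this
  -- key matrix identity obtained by conjugating the decomposition with Uᴴ, U
  have hkey : ∀ ρ : Matrix (Fin 2) (Fin 2) ℂ,
      ρ = (s:ℂ) • (((1 - p/2 : ℝ):ℂ) • (Uᴴ * W ρ * U)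
            + ((p/2 : ℝ):ℂ) • ((PauliZ * U)ᴴ * W ρ * (PauliZ * U)))
          - ((s:ℂ) - 1) • (Uᴴ * M ρ * U) := by
    intro ρ
    have h : Uᴴ * (U * ρ * Uᴴ) * U = Uᴴ * ((s:ℂ) • E (W ρ) - ((s:ℂ) - 1) • M ρ) * U := by
      rw [hdecomp]
    have hl : Uᴴ * (U * ρ * Uᴴ) * U = ρ := by
      rw [show Uᴴ * (U * ρ * Uᴴ) * U = (Uᴴ * U) * ρ * (Uᴴ * U) by noncomm_ring, hUl,
        one_mul, mul_one]
    rw [hl, hE] at h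
    conv_lhs => rw [h]
    simp only [Matrix.conjTranspose_mul, pauliZ_conjTranspose, Matrix.mul_sub,
      Matrix.sub_mul, Matrix.mul_add, Matrix.add_mul, Matrix.mul_smul, Matrix.smul_mul,
      Matrix.mul_assoc, smul_add, smul_sub]
  set A : ℝ := ∑ i, ‖Matrix.trace (Uᴴ * K i)‖^2 with hA
  set B : ℝ := ∑ i, ‖Matrix.trace ((PauliZ * U)ᴴ * K i)‖^2 with hB
  set C : ℝ := ∑ j, ‖Matrix.trace (Uᴴ * L j)‖^2 with hC
  have hsum4 : (∑ a : Fin 2, ∑ b : Fin 2, (Matrix.single a b (1:ℂ)) a b) = 4 := by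
    simp [Matrix.single_apply_same, Fin.sum_univ_two]
    norm_num
  have hfin : (4:ℂ) = (s:ℂ) * (((1 - p/2 : ℝ):ℂ) * (A:ℂ) + ((p/2 : ℝ):ℂ) * (B:ℂ))
      - ((s:ℂ) - 1) * (C:ℂ) := by
    have hWsum := phi_channel U K W hKW
    have hWsum' := phi_channel (PauliZ * U) K W hKW
    have hMsum := phi_channel U L M hLM
    calc (4:ℂ) = ∑ a : Fin 2, ∑ b : Fin 2, (Matrix.single a b (1:ℂ)) a b := hsum4.symm
      _ = ∑ a : Fin 2, ∑ b : Fin 2,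
            ((s:ℂ) * (((1 - p/2 : ℝ):ℂ) * ((Uᴴ * W (Matrix.single a b 1) * U) a b)
              + ((p/2 : ℝ):ℂ) * (((PauliZ * U)ᴴ * W (Matrix.single a b 1) * (PauliZ * U)) a b))
            - ((s:ℂ) - 1) * ((Uᴴ * M (Matrix.single a b 1) * U) a b)) := by
          refine Finset.sum_congr rfl fun a _ => Finset.sum_congr rfl fun b _ => ?_
          have h := congrArg (fun X : Matrix (Fin 2) (Fin 2) ℂ => X a b)
            (hkey (Matrix.single a b 1))
          simpa [Matrix.sub_apply, Matrix.add_apply, Matrix.smul_apply, smul_eq_mul,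
            mul_add] using h
      _ = (s:ℂ) * (((1 - p/2 : ℝ):ℂ) * (A:ℂ) + ((p/2 : ℝ):ℂ) * (B:ℂ))
            - ((s:ℂ) - 1) * (C:ℂ) := by
          simp only [Finset.sum_sub_distrib, Finset.sum_add_distrib, ← Finset.mul_sum]
          rw [hWsum, hWsum', hMsum]
  have hre : (4:ℝ) = s * ((1 - p/2) * A + (p/2) * B) - (s - 1) * C := by
    exact_mod_cast hfin
  have hA0 : 0 ≤ A := Finset.sum_nonneg fun i _ => by positivity
  have hB0 : 0 ≤ B := Finset.sum_nonneg fun i _ => by positivity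
  have hC0 : 0 ≤ C := Finset.sum_nonneg fun j _ => by positivity
  have htrK : ∑ i, (Matrix.trace ((K i)ᴴ * K i)).re = 2 := by
    have h1 : ∑ i, Matrix.trace ((K i)ᴴ * K i) = 2 := by
      rw [← Matrix.trace_sum, hK1]
      simp [Matrix.trace_one]
    rw [← Complex.re_sum, h1]
    norm_num
  have hnormU : ‖vecM U‖ ^ 2 = 2 := by
    rw [norm_vecM_sq, hUl]
    simp [Matrix.trace_one]
  have hUU : Matrix.trace (Uᴴ * U) = 2 := by rw [hUl]; simp [Matrix.trace_one]
  have hZUZU : Matrix.trace ((PauliZ * U)ᴴ * (PauliZ * U)) = 2 := by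
    rw [Matrix.conjTranspose_mul, pauliZ_conjTranspose,
      show Uᴴ * PauliZ * (PauliZ * U) = Uᴴ * (PauliZ * PauliZ) * U by noncomm_ring,
      pauliZ_mul_self, mul_one, hUl]
    simp [Matrix.trace_one]
  -- A ≤ 4 via Cauchy–Schwarz
  have hA4 : A ≤ 4 := by
    have hstep : ∀ i, ‖Matrix.trace (Uᴴ * K i)‖^2 ≤ 2 * (Matrix.trace ((K i)ᴴ * K i)).re := by
      intro i
      have hcs := norm_inner_le_norm (𝕜 := ℂ) (vecM U) (vecM (K i))
      have h2 : ‖(inner ℂ (vecM U) (vecM (K i)) : ℂ)‖^2 ≤ ‖vecM U‖^2 * ‖vecM (K i)‖^2 := by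
        rw [← mul_pow]
        exact pow_le_pow_left₀ (norm_nonneg _) hcs 2
      rw [inner_vecM, hnormU, norm_vecM_sq] at h2
      exact h2
    calc A ≤ ∑ i, 2 * (Matrix.trace ((K i)ᴴ * K i)).re :=
          Finset.sum_le_sum fun i _ => hstep i
      _ = 4 := by rw [← Finset.mul_sum, htrK]; norm_num
  -- A + B ≤ 4 via Bessel's inequality
  have hAB : A + B ≤ 4 := by
    set c : ℂ := (((Real.sqrt 2)⁻¹ : ℝ) : ℂ) with hc
    have hsq : (Real.sqrt 2)⁻¹ * (Real.sqrt 2)⁻¹ * 2 = 1 := by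
      have h2 : Real.sqrt 2 * Real.sqrt 2 = 2 := Real.mul_self_sqrt (by norm_num)
      field_simp
      rw [Real.sq_sqrt (by norm_num : (0:ℝ) ≤ 2)]
    have hcc : (starRingEnd ℂ) c * c * 2 = 1 := by
      rw [hc, Complex.conj_ofReal]
      exact_mod_cast congrArg (Complex.ofReal) hsq
    have hcnorm : ‖c‖^2 = 1/2 := by
      rw [hc, Complex.norm_real, Real.norm_eq_abs,
        abs_of_nonneg (by positivity), inv_pow, Real.sq_sqrt (by norm_num : (0:ℝ) ≤ 2)]
      norm_num
    set v : Fin 2 → EuclideanSpace ℂ (Fin 2 × Fin 2) :=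
      ![c • vecM U, c • vecM (PauliZ * U)] with hv
    have hZUU : Matrix.trace (Uᴴ * (PauliZ * U)) = 0 := by
      rw [← Matrix.mul_assoc, Matrix.trace_mul_comm, ← Matrix.mul_assoc, hUr, one_mul,
        pauliZ_trace]
    have hUZU : Matrix.trace ((PauliZ * U)ᴴ * U) = 0 := by
      rw [Matrix.conjTranspose_mul, pauliZ_conjTranspose, Matrix.mul_assoc,
        Matrix.trace_mul_comm, Matrix.mul_assoc, hUr, mul_one, pauliZ_trace]
    have i00 : (inner ℂ (c • vecM U) (c • vecM U) : ℂ) = 1 := by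
      rw [inner_smul_left, inner_smul_right, inner_vecM, hUU]; linear_combination hcc
    have i01 : (inner ℂ (c • vecM U) (c • vecM (PauliZ * U)) : ℂ) = 0 := by
      rw [inner_smul_left, inner_smul_right, inner_vecM, hZUU]; ring
    have i10 : (inner ℂ (c • vecM (PauliZ * U)) (c • vecM U) : ℂ) = 0 := by
      rw [inner_smul_left, inner_smul_right, inner_vecM, hUZU]; ring
    have i11 : (inner ℂ (c • vecM (PauliZ * U)) (c • vecM (PauliZ * U)) : ℂ) = 1 := by
      rw [inner_smul_left, inner_smul_right, inner_vecM, hZUZU]; linear_combination hcc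
    have horth : Orthonormal ℂ v := by
      rw [orthonormal_iff_ite]
      intro i j
      fin_cases i <;> fin_cases j <;>
        · simp only [hv, Fin.zero_eta, Fin.mk_one, Matrix.cons_val_zero, Matrix.cons_val_one,
            Matrix.head_cons, i00, i01, i10, i11]
          norm_num
    have hstep : ∀ i, ‖Matrix.trace (Uᴴ * K i)‖^2 + ‖Matrix.trace ((PauliZ * U)ᴴ * K i)‖^2
        ≤ 2 * (Matrix.trace ((K i)ᴴ * K i)).re := by
      intro i
      have hb := horth.sum_inner_products_le (vecM (K i)) (s := Finset.univ)
      rw [Fin.sum_univ_two] at hb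
      have e0 : ‖(inner ℂ (v 0) (vecM (K i)) : ℂ)‖^2
          = 1/2 * ‖Matrix.trace (Uᴴ * K i)‖^2 := by
        simp only [hv, Matrix.cons_val_zero, inner_smul_left, inner_vecM, norm_mul,
          mul_pow, RCLike.norm_conj, hcnorm]
      have e1 : ‖(inner ℂ (v 1) (vecM (K i)) : ℂ)‖^2
          = 1/2 * ‖Matrix.trace ((PauliZ * U)ᴴ * K i)‖^2 := by
        simp only [hv, Matrix.cons_val_one, Matrix.head_cons, Matrix.cons_val_zero, inner_smul_left, inner_vecM,
          norm_mul, mul_pow, RCLike.norm_conj, hcnorm]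
      rw [e0, e1, norm_vecM_sq] at hb
      linarith
    calc A + B = ∑ i, (‖Matrix.trace (Uᴴ * K i)‖^2
          + ‖Matrix.trace ((PauliZ * U)ᴴ * K i)‖^2) := by
          rw [hA, hB, Finset.sum_add_distrib]
      _ ≤ ∑ i, 2 * (Matrix.trace ((K i)ᴴ * K i)).re := Finset.sum_le_sum fun i _ => hstep i
      _ = 4 := by rw [← Finset.mul_sum, htrK]; norm_num
  -- final arithmetic
  have h2p : (0:ℝ) < 2 - p := by linarith
  rw [ge_iff_le, div_le_iff₀ h2p]
  have hX : (1 - p/2) * A + (p/2) * B ≤ 4 - 2*p := by nlinarith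
  have h4 : 4 ≤ s * (4 - 2*p) := by
    nlinarith [mul_nonneg (by linarith : (0:ℝ) ≤ s - 1) hC0,
      mul_le_mul_of_nonneg_left hX (by linarith : (0:ℝ) ≤ s)]
  nlinarith
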